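/- (Expressive completeness for hornALC-concepts.) Let τ be a finite vocabulary and C an ALC-concept of depth ℓ. The following are equivalent: (1) C is equivalent to a hornALC-concept; (2) C is preserved under Horn simulations; (3) C is preserved under ℓ-Horn simulations; (4) C is equivalent to a hornALC-concept of depth ≤ ℓ. Moreover, the same four conditions are equivalent when 'equivalent' and 'preserved' are relativized to finite τ-structures only. -/

import Mathlib

/-- A τ-structure over domain `D`, for a vocabulary with concept names `Con`
(unary predicates) and role names `Rol` (binary predicates). -/
structure Str (Con Rol : Type) (D : Type) where
  conI : Con → Set D
  rolI : Rol → Set (D × D)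

/-- ALC-concepts over the vocabulary `(Con, Rol)`. -/
inductive ALC (Con Rol : Type) where
  | top : ALC Con Rol
  | bot : ALC Con Rol
  | atomic : Con → ALC Con Rol
  | neg : ALC Con Rol → ALC Con Rol
  | disj : ALC Con Rol → ALC Con Rol → ALC Con Rol
  | conj : ALC Con Rol → ALC Con Rol → ALC Con Rol
  | impl : ALC Con Rol → ALC Con Rol → ALC Con Rol
  | ex : Rol → ALC Con Rol → ALC Con Rol
  | all : Rol → ALC Con Rol → ALC Con Rol

variable {Con Rol D D1 D2 : Type}

/-- The extension `C^𝔄` of an ALC-concept in a structure. -/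
def ALC.sem (M : Str Con Rol D) : ALC Con Rol → Set D
  | .top => Set.univ
  | .bot => ∅
  | .atomic A => M.conI A
  | .neg C => (C.sem M)ᶜ
  | .disj C C' => C.sem M ∪ C'.sem M
  | .conj C C' => C.sem M ∩ C'.sem M
  | .impl C C' => (C.sem M)ᶜ ∪ C'.sem M
  | .ex R C => {a | ∃ b, (a, b) ∈ M.rolI R ∧ b ∈ C.sem M}
  | .all R C => {a | ∀ b, (a, b) ∈ M.rolI R → b ∈ C.sem M}

/-- The depth of an ALC-concept: maximal nesting of `∃R` and `∀R`. -/
def ALC.depth : ALC Con Rol → ℕ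
  | .top | .bot | .atomic _ => 0
  | .neg C => C.depth
  | .disj C C' | .conj C C' | .impl C C' => max C.depth C'.depth
  | .ex _ C | .all _ C => C.depth + 1

/-- ELU-concepts: built from concept names and ⊤ using ⊓, ⊔ and ∃R only. -/
inductive ALC.IsELU : ALC Con Rol → Prop
  | top : IsELU .top
  | atomic (A : Con) : IsELU (.atomic A)
  | conj {C C' : ALC Con Rol} : IsELU C → IsELU C' → IsELU (.conj C C')
  | disj {C C' : ALC Con Rol} : IsELU C → IsELU C' → IsELU (.disj C C')
  | ex (R : Rol) {C : ALC Con Rol} : IsELU C → IsELU (.ex R C)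

/-- hornALC-concepts: `H ::= ⊥ | ⊤ | A | H⊓H' | L→H | ∃R.H | ∀R.H` with `L` an ELU-concept. -/
inductive ALC.IsHorn : ALC Con Rol → Prop
  | bot : IsHorn .bot
  | top : IsHorn .top
  | atomic (A : Con) : IsHorn (.atomic A)
  | conj {H H' : ALC Con Rol} : IsHorn H → IsHorn H' → IsHorn (.conj H H')
  | impl {L H : ALC Con Rol} : IsELU L → IsHorn H → IsHorn (.impl L H)
  | ex (R : Rol) {H : ALC Con Rol} : IsHorn H → IsHorn (.ex R H)
  | all (R : Rol) {H : ALC Con Rol} : IsHorn H → IsHorn (.all R H)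

/-- `S` is a simulation between `M` and `N`. -/
def IsSim (M : Str Con Rol D1) (N : Str Con Rol D2) (S : Set (D1 × D2)) : Prop :=
  ∀ a b, (a, b) ∈ S →
    (∀ A, a ∈ M.conI A → b ∈ N.conI A) ∧
    (∀ R a', (a, a') ∈ M.rolI R → ∃ b', (b, b') ∈ N.rolI R ∧ (a', b') ∈ S)

/-- `𝔄,a ⪯_sim 𝔅,b`: some simulation contains `(a,b)`. -/
def Sim (M : Str Con Rol D1) (N : Str Con Rol D2) (a : D1) (b : D2) : Prop :=
  ∃ S, IsSim M N S ∧ (a, b) ∈ S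

/-- The ℓ-round simulation relations `⪯^ℓ_sim`. -/
def SimL (M : Str Con Rol D1) (N : Str Con Rol D2) : ℕ → D1 → D2 → Prop
  | 0 => fun a b => ∀ A, a ∈ M.conI A → b ∈ N.conI A
  | ℓ + 1 => fun a b =>
      (∀ A, a ∈ M.conI A → b ∈ N.conI A) ∧
      ∀ R a', (a, a') ∈ M.rolI R → ∃ b', (b, b') ∈ N.rolI R ∧ SimL M N ℓ a' b'

/-- `X R↑ Y`. -/
def relUp (R : Set (D1 × D1)) (X Y : Set D1) : Prop := ∀ a ∈ X, ∃ b ∈ Y, (a, b) ∈ R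

/-- `X R↓ Y`. -/
def relDown (R : Set (D1 × D1)) (X Y : Set D1) : Prop := ∀ b ∈ Y, ∃ a ∈ X, (a, b) ∈ R

/-- `Z` is a Horn simulation between `M` and `N`. -/
def IsHornSim (M : Str Con Rol D1) (N : Str Con Rol D2) (Z : Set (Set D1 × D2)) : Prop :=
  ∀ X b, (X, b) ∈ Z →
    X.Nonempty ∧
    (∀ A, X ⊆ M.conI A → b ∈ N.conI A) ∧
    (∀ R Y, relUp (M.rolI R) X Y →
        ∃ Y', Y' ⊆ Y ∧ ∃ b', (b, b') ∈ N.rolI R ∧ (Y', b') ∈ Z) ∧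
    (∀ R b', (b, b') ∈ N.rolI R → ∃ Y, relDown (M.rolI R) X Y ∧ (Y, b') ∈ Z) ∧
    (∀ a ∈ X, Sim N M b a)

/-- `𝔄,X ⪯_horn 𝔅,b`: some Horn simulation contains `(X,b)`. -/
def HornSim (M : Str Con Rol D1) (N : Str Con Rol D2) (X : Set D1) (b : D2) : Prop :=
  ∃ Z, IsHornSim M N Z ∧ (X, b) ∈ Z

/-- The ℓ-round Horn simulation relations `⪯^ℓ_horn`. -/
def HornSimL (M : Str Con Rol D1) (N : Str Con Rol D2) : ℕ → Set D1 → D2 → Prop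
  | 0 => fun X b =>
      X.Nonempty ∧ (∀ A, X ⊆ M.conI A → b ∈ N.conI A) ∧ ∀ a ∈ X, SimL N M 0 b a
  | ℓ + 1 => fun X b =>
      (X.Nonempty ∧ (∀ A, X ⊆ M.conI A → b ∈ N.conI A) ∧ ∀ a ∈ X, SimL N M 0 b a) ∧
      (∀ R Y, relUp (M.rolI R) X Y →
          ∃ Y', Y' ⊆ Y ∧ ∃ b', (b, b') ∈ N.rolI R ∧ HornSimL M N ℓ Y' b') ∧
      (∀ R b', (b, b') ∈ N.rolI R → ∃ Y, relDown (M.rolI R) X Y ∧ HornSimL M N ℓ Y b') ∧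
      (∀ a ∈ X, SimL N M (ℓ + 1) b a)

/-- `𝔄,X ≤^ℓ_hornALC 𝔅,b`. -/
def leHornDepth (M : Str Con Rol D1) (N : Str Con Rol D2) (ℓ : ℕ) (X : Set D1) (b : D2) : Prop :=
  ∀ C : ALC Con Rol, C.IsHorn → C.depth ≤ ℓ → X ⊆ C.sem M → b ∈ C.sem N

/-- `𝔄,X ≤_hornALC 𝔅,b`. -/
def leHorn (M : Str Con Rol D1) (N : Str Con Rol D2) (X : Set D1) (b : D2) : Prop :=
  ∀ C : ALC Con Rol, C.IsHorn → X ⊆ C.sem M → b ∈ C.sem N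

/-- `𝔄,a ≤^ℓ_ELU 𝔅,b`. -/
def leELUDepth (M : Str Con Rol D1) (N : Str Con Rol D2) (ℓ : ℕ) (a : D1) (b : D2) : Prop :=
  ∀ C : ALC Con Rol, C.IsELU → C.depth ≤ ℓ → a ∈ C.sem M → b ∈ C.sem N

/-- `𝔄,a ≤_ELU 𝔅,b`. -/
def leELU (M : Str Con Rol D1) (N : Str Con Rol D2) (a : D1) (b : D2) : Prop :=
  ∀ C : ALC Con Rol, C.IsELU → a ∈ C.sem M → b ∈ C.sem N

/-- Two concepts are equivalent: same extension in every τ-structure. -/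
def ConceptEquiv (C C' : ALC Con Rol) : Prop :=
  ∀ (D : Type) [Nonempty D] (M : Str Con Rol D), C.sem M = C'.sem M

/-- Two concepts are equivalent over finite structures. -/
def ConceptEquivFin (C C' : ALC Con Rol) : Prop :=
  ∀ (D : Type) [Nonempty D] [Finite D] (M : Str Con Rol D), C.sem M = C'.sem M

/-- `C` is preserved under Horn simulations. -/
def PreservedHorn (C : ALC Con Rol) : Prop :=
  ∀ (D1 D2 : Type) [Nonempty D1] [Nonempty D2]
    (M : Str Con Rol D1) (N : Str Con Rol D2) (X : Set D1) (b : D2),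
    X ⊆ C.sem M → HornSim M N X b → b ∈ C.sem N

/-- `C` is preserved under ℓ-Horn simulations. -/
def PreservedHornL (C : ALC Con Rol) (ℓ : ℕ) : Prop :=
  ∀ (D1 D2 : Type) [Nonempty D1] [Nonempty D2]
    (M : Str Con Rol D1) (N : Str Con Rol D2) (X : Set D1) (b : D2),
    X ⊆ C.sem M → HornSimL M N ℓ X b → b ∈ C.sem N

/-- `C` is preserved under Horn simulations between finite structures. -/
def PreservedHornFin (C : ALC Con Rol) : Prop :=
  ∀ (D1 D2 : Type) [Nonempty D1] [Nonempty D2] [Finite D1] [Finite D2]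
    (M : Str Con Rol D1) (N : Str Con Rol D2) (X : Set D1) (b : D2),
    X ⊆ C.sem M → HornSim M N X b → b ∈ C.sem N

/-- `C` is preserved under ℓ-Horn simulations between finite structures. -/
def PreservedHornLFin (C : ALC Con Rol) (ℓ : ℕ) : Prop :=
  ∀ (D1 D2 : Type) [Nonempty D1] [Nonempty D2] [Finite D1] [Finite D2]
    (M : Str Con Rol D1) (N : Str Con Rol D2) (X : Set D1) (b : D2),
    X ⊆ C.sem M → HornSimL M N ℓ X b → b ∈ C.sem N

/-! ### Auxiliary development: tree types, canonical structures, simulations -/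

section Aux

open Classical in
noncomputable instance (priority := low) : ∀ {α : Type}, DecidableEq α := fun _ _ => Classical.dec _

set_option linter.unusedSectionVars false

variable [Finite Con] [Finite Rol]

/-- Depth-`k` tree types over the vocabulary. -/
def Tr (Con Rol : Type) : ℕ → Type
  | 0 => Set Con
  | (k+1) => Set Con × (Rol → Set (Tr Con Rol k))

instance trFinite : ∀ k, Finite (Tr Con Rol k) := by
  intro k
  induction k with
  | zero => exact inferInstanceAs (Finite (Set Con))
  | succ k ih => exact inferInstanceAs (Finite (Set Con × (Rol → Set (Tr Con Rol k))))

instance trNonempty : ∀ k, Nonempty (Tr Con Rol k)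
  | 0 => ⟨(∅ : Set Con)⟩
  | (k+1) => ⟨((∅ : Set Con), fun _ => (∅ : Set (Tr Con Rol k)))⟩

/-- The label (set of concept names) at the root of a tree type. -/
def lab : ∀ {k}, Tr Con Rol k → Set Con
  | 0, t => t
  | (_+1), t => t.1

/-- The `k`-type of an element of a structure. -/
def tp (M : Str Con Rol D) : ∀ (k : ℕ), D → Tr Con Rol k
  | 0, a => {A | a ∈ M.conI A}
  | (k+1), a => ({A | a ∈ M.conI A},
      fun R => {t | ∃ a', (a, a') ∈ M.rolI R ∧ tp M k a' = t})

lemma mem_lab_tp (M : Str Con Rol D) (k : ℕ) (a : D) (A : Con) :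
    A ∈ lab (tp M k a) ↔ a ∈ M.conI A := by
  cases k <;> rfl

lemma mem_tp_succ (M : Str Con Rol D) (k : ℕ) (a : D) (R : Rol) (s : Tr Con Rol k) :
    s ∈ (tp M (k+1) a).2 R ↔ ∃ a', (a, a') ∈ M.rolI R ∧ tp M k a' = s := Iff.rfl

/-- The domain of the canonical tree structure of height `ℓ`. -/
def TD (Con Rol : Type) (ℓ : ℕ) : Type := {x : Σ k, Tr Con Rol k // x.1 ≤ ℓ}

/-- A node of the canonical structure. -/
def nd (ℓ : ℕ) {k : ℕ} (hk : k ≤ ℓ) (t : Tr Con Rol k) : TD Con Rol ℓ := ⟨⟨k, t⟩, hk⟩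

/-- The canonical tree structure. -/
def TSt (Con Rol : Type) (ℓ : ℕ) : Str Con Rol (TD Con Rol ℓ) where
  conI A := {x | A ∈ lab x.1.2}
  rolI R := {p | ∃ (j : ℕ) (t : Tr Con Rol (j+1)) (s : Tr Con Rol j),
      p.1.1 = ⟨j+1, t⟩ ∧ p.2.1 = ⟨j, s⟩ ∧ s ∈ t.2 R}

instance TD_finite (ℓ : ℕ) : Finite (TD Con Rol ℓ) := by
  have : Finite ((k : Fin (ℓ+1)) × Tr Con Rol k.1) := inferInstance
  apply Finite.of_injective (β := (k : Fin (ℓ+1)) × Tr Con Rol k.1)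
    (fun x => ⟨⟨x.1.1, Nat.lt_succ_of_le x.2⟩, x.1.2⟩)
  rintro ⟨⟨k, t⟩, hk⟩ ⟨⟨k', t'⟩, hk'⟩ h
  simp only [Sigma.mk.inj_iff, Fin.mk.injEq] at h
  obtain ⟨rfl, h2⟩ := h
  simp only [heq_eq_eq] at h2
  subst h2
  rfl

instance TD_nonempty (ℓ : ℕ) : Nonempty (TD Con Rol ℓ) :=
  ⟨nd ℓ (Nat.zero_le ℓ) ((∅ : Set Con) : Tr Con Rol 0)⟩

lemma edge_intro {ℓ k : ℕ} (hk1 : k+1 ≤ ℓ) (hk : k ≤ ℓ) {t : Tr Con Rol (k+1)}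
    {s : Tr Con Rol k} (R : Rol) (h : s ∈ t.2 R) :
    (nd ℓ hk1 t, nd ℓ hk s) ∈ (TSt Con Rol ℓ).rolI R :=
  ⟨k, t, s, rfl, rfl, h⟩

lemma edge_elim {ℓ k : ℕ} {hk1 : k+1 ≤ ℓ} {t : Tr Con Rol (k+1)} {y : TD Con Rol ℓ} {R : Rol}
    (h : (nd ℓ hk1 t, y) ∈ (TSt Con Rol ℓ).rolI R) :
    ∃ (s : Tr Con Rol k) (hk : k ≤ ℓ), y = nd ℓ hk s ∧ s ∈ t.2 R := by
  obtain ⟨j, t', s, h1, h2, h3⟩ := h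
  simp only [nd, Sigma.mk.inj_iff] at h1
  obtain ⟨hj, ht⟩ := h1
  obtain rfl : j = k := by omega
  rw [heq_eq_eq] at ht
  subst ht
  obtain ⟨⟨ky, ty⟩, hy⟩ := y
  simp only [Sigma.mk.inj_iff] at h2
  obtain ⟨rfl, hts⟩ := h2
  rw [heq_eq_eq] at hts
  subst hts
  exact ⟨ty, hy, rfl, h3⟩

lemma edge_elim0 {ℓ : ℕ} {hk : 0 ≤ ℓ} {t : Tr Con Rol 0} {y : TD Con Rol ℓ} {R : Rol}
    (h : (nd ℓ hk t, y) ∈ (TSt Con Rol ℓ).rolI R) : False := by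
  obtain ⟨j, t', s, h1, h2, h3⟩ := h
  simp only [nd, Sigma.mk.inj_iff] at h1
  omega

lemma tp_nd (ℓ : ℕ) : ∀ (k : ℕ) (hk : k ≤ ℓ) (t : Tr Con Rol k),
    tp (TSt Con Rol ℓ) k (nd ℓ hk t) = t := by
  intro k
  induction k with
  | zero => intro hk t; rfl
  | succ k ih =>
    intro hk t
    have hk' : k ≤ ℓ := Nat.le_of_succ_le hk
    show (({A | nd ℓ hk t ∈ (TSt Con Rol ℓ).conI A},
      fun R => {s | ∃ y, (nd ℓ hk t, y) ∈ (TSt Con Rol ℓ).rolI R ∧ tp (TSt Con Rol ℓ) k y = s})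
        : Tr Con Rol (k+1)) = t
    have h1 : {A | nd ℓ hk t ∈ (TSt Con Rol ℓ).conI A} = t.1 := rfl
    have h2 : (fun R => {s | ∃ y, (nd ℓ hk t, y) ∈ (TSt Con Rol ℓ).rolI R ∧
        tp (TSt Con Rol ℓ) k y = s}) = t.2 := by
      funext R
      ext s
      constructor
      · rintro ⟨y, hedge, htp⟩
        obtain ⟨s', hks', rfl, hmem⟩ := edge_elim hedge
        rw [ih hks' s'] at htp
        exact htp ▸ hmem
      · intro hs
        exact ⟨nd ℓ hk' s, edge_intro hk hk' R hs, ih hk' s⟩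
    calc (({A | nd ℓ hk t ∈ (TSt Con Rol ℓ).conI A},
      fun R => {s | ∃ y, (nd ℓ hk t, y) ∈ (TSt Con Rol ℓ).rolI R ∧ tp (TSt Con Rol ℓ) k y = s})
        : Tr Con Rol (k+1)) = (t.1, t.2) := by rw [h1, h2]
    _ = (show Set Con × (Rol → Set (Tr Con Rol k)) from t) := rfl

end Aux
section Aux2

set_option linter.unusedSectionVars false

variable [Finite Con] [Finite Rol]

/-- The `k`-type of a point determines the satisfaction of concepts of depth `≤ k`. -/
lemma tp_sem_iff : ∀ (C : ALC Con Rol) (k : ℕ), C.depth ≤ k →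
    ∀ {D1 D2 : Type} (M : Str Con Rol D1) (N : Str Con Rol D2) (a : D1) (b : D2),
    tp M k a = tp N k b → (a ∈ C.sem M ↔ b ∈ C.sem N) := by
  intro C
  induction C with
  | top => intro k hk D1 D2 M N a b h; simp [ALC.sem]
  | bot => intro k hk D1 D2 M N a b h; simp [ALC.sem]
  | atomic A =>
    intro k hk D1 D2 M N a b h
    show a ∈ M.conI A ↔ b ∈ N.conI A
    rw [← mem_lab_tp M k, ← mem_lab_tp N k, h]
  | neg C ih =>
    intro k hk D1 D2 M N a b h
    have := ih k hk M N a b h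
    simp only [ALC.sem, Set.mem_compl_iff]
    exact not_congr this
  | disj C C' ih ih' =>
    intro k hk D1 D2 M N a b h
    rw [ALC.depth, max_le_iff] at hk
    simp only [ALC.sem, Set.mem_union]
    exact or_congr (ih k hk.1 M N a b h) (ih' k hk.2 M N a b h)
  | conj C C' ih ih' =>
    intro k hk D1 D2 M N a b h
    rw [ALC.depth, max_le_iff] at hk
    simp only [ALC.sem, Set.mem_inter_iff]
    exact and_congr (ih k hk.1 M N a b h) (ih' k hk.2 M N a b h)
  | impl C C' ih ih' =>
    intro k hk D1 D2 M N a b h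
    rw [ALC.depth, max_le_iff] at hk
    simp only [ALC.sem, Set.mem_union, Set.mem_compl_iff]
    exact or_congr (not_congr (ih k hk.1 M N a b h)) (ih' k hk.2 M N a b h)
  | ex R C ih =>
    intro k hk D1 D2 M N a b h
    rw [ALC.depth] at hk
    obtain ⟨k, rfl⟩ : ∃ k', k = k' + 1 := ⟨k - 1, by omega⟩
    have hsucc : (tp M (k+1) a).2 R = (tp N (k+1) b).2 R := by rw [h]
    constructor
    · rintro ⟨a', ha', hsa⟩
      have : tp M k a' ∈ (tp N (k+1) b).2 R := hsucc ▸ ⟨a', ha', rfl⟩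
      obtain ⟨b', hb', htp⟩ := this
      exact ⟨b', hb', ((ih k (by omega) M N a' b' htp.symm).mp hsa)⟩
    · rintro ⟨b', hb', hsb⟩
      have : tp N k b' ∈ (tp M (k+1) a).2 R := hsucc ▸ ⟨b', hb', rfl⟩
      obtain ⟨a', ha', htp⟩ := this
      exact ⟨a', ha', ((ih k (by omega) M N a' b' htp).mpr hsb)⟩
  | all R C ih =>
    intro k hk D1 D2 M N a b h
    rw [ALC.depth] at hk
    obtain ⟨k, rfl⟩ : ∃ k', k = k' + 1 := ⟨k - 1, by omega⟩
    have hsucc : (tp M (k+1) a).2 R = (tp N (k+1) b).2 R := by rw [h]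
    constructor
    · intro ha b' hb'
      have : tp N k b' ∈ (tp M (k+1) a).2 R := hsucc ▸ ⟨b', hb', rfl⟩
      obtain ⟨a', ha', htp⟩ := this
      exact (ih k (by omega) M N a' b' htp).mp (ha a' ha')
    · intro hb a' ha'
      have : tp M k a' ∈ (tp N (k+1) b).2 R := hsucc ▸ ⟨a', ha', rfl⟩
      obtain ⟨b', hb', htp⟩ := this
      exact (ih k (by omega) M N a' b' htp.symm).mpr (hb b' hb')

/-- The set of `k`-types satisfying a concept (of depth `≤ k`). -/
def SCset (k : ℕ) (C : ALC Con Rol) : Set (Tr Con Rol k) :=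
  {t | nd k le_rfl t ∈ C.sem (TSt Con Rol k)}

lemma mem_SCset {C : ALC Con Rol} {k : ℕ} (hk : C.depth ≤ k) {D : Type}
    (M : Str Con Rol D) (a : D) :
    a ∈ C.sem M ↔ tp M k a ∈ SCset k C :=
  tp_sem_iff C k hk M (TSt Con Rol k) a (nd k le_rfl (tp M k a)) (by rw [tp_nd])

/-- `k`-round simulation on tree types. -/
def tsim : ∀ (k : ℕ), Tr Con Rol k → Tr Con Rol k → Prop
  | 0, u, t => lab u ⊆ lab t
  | (k+1), u, t => lab u ⊆ lab t ∧ ∀ R, ∀ u' ∈ u.2 R, ∃ t' ∈ t.2 R, tsim k u' t'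

lemma tsim_zero {u t : Tr Con Rol 0} : tsim 0 u t ↔ lab u ⊆ lab t := by rw [tsim]

lemma tsim_succ {k : ℕ} {u t : Tr Con Rol (k+1)} :
    tsim (k+1) u t ↔ (lab u ⊆ lab t ∧ ∀ R, ∀ u' ∈ u.2 R, ∃ t' ∈ t.2 R, tsim k u' t') := by
  rw [tsim]

lemma tsim_lab {k : ℕ} {u t : Tr Con Rol k} (h : tsim k u t) : lab u ⊆ lab t := by
  cases k with
  | zero => exact tsim_zero.mp h
  | succ k => exact (tsim_succ.mp h).1

lemma simL_iff_tsim (M : Str Con Rol D1) (N : Str Con Rol D2) :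
    ∀ (k : ℕ) (a : D1) (b : D2), SimL M N k a b ↔ tsim k (tp M k a) (tp N k b) := by
  intro k
  induction k with
  | zero =>
    intro a b
    rw [tsim_zero]
    constructor
    · intro h A hA
      exact (mem_lab_tp N 0 b A).mpr (h A ((mem_lab_tp M 0 a A).mp hA))
    · intro h A hA
      exact (mem_lab_tp N 0 b A).mp (h ((mem_lab_tp M 0 a A).mpr hA))
  | succ k ih =>
    intro a b
    rw [tsim_succ]
    constructor
    · rintro ⟨h0, hf⟩
      refine ⟨fun A hA => (mem_lab_tp N (k+1) b A).mpr (h0 A ((mem_lab_tp M (k+1) a A).mp hA)), ?_⟩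
      rintro R u' ⟨a', ha', rfl⟩
      obtain ⟨b', hb', hs⟩ := hf R a' ha'
      exact ⟨tp N k b', ⟨b', hb', rfl⟩, (ih a' b').mp hs⟩
    · rintro ⟨h0, hf⟩
      refine ⟨fun A hA => (mem_lab_tp N (k+1) b A).mp (h0 ((mem_lab_tp M (k+1) a A).mpr hA)), ?_⟩
      intro R a' ha'
      obtain ⟨t', ⟨b', hb', rfl⟩, hs⟩ := hf R (tp M k a') ⟨a', ha', rfl⟩
      exact ⟨b', hb', (ih a' b').mpr hs⟩

/-- Over the canonical structure, `k`-round simulation of tree types yields a genuine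
simulation. -/
lemma sim_of_tsim (ℓ : ℕ) {k : ℕ} (hk : k ≤ ℓ) {v w : Tr Con Rol k} (h : tsim k v w) :
    Sim (TSt Con Rol ℓ) (TSt Con Rol ℓ) (nd ℓ hk v) (nd ℓ hk w) := by
  refine ⟨{p | ∃ (j : ℕ) (hj : j ≤ ℓ) (x y : Tr Con Rol j),
      p.1 = nd ℓ hj x ∧ p.2 = nd ℓ hj y ∧ tsim j x y}, ?_, ⟨k, hk, v, w, rfl, rfl, h⟩⟩
  rintro a b ⟨j, hj, x, y, ha, hb, hxy⟩
  subst ha; subst hb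
  constructor
  · intro A hA
    exact tsim_lab hxy hA
  · intro R a' ha'
    cases j with
    | zero => exact absurd ha' (fun hc => edge_elim0 hc)
    | succ j =>
      obtain ⟨s, hs, rfl, hmem⟩ := edge_elim ha'
      obtain ⟨t', ht', hsim'⟩ := (tsim_succ.mp hxy).2 R s hmem
      exact ⟨nd ℓ hs t', edge_intro hj hs R ht', ⟨j, hs, s, t', rfl, rfl, hsim'⟩⟩

/-- Finite conjunctions. -/
def bigConj : List (ALC Con Rol) → ALC Con Rol
  | [] => .top
  | C :: l => .conj C (bigConj l)

lemma sem_bigConj {D : Type} (M : Str Con Rol D) (a : D) :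
    ∀ l : List (ALC Con Rol), a ∈ (bigConj l).sem M ↔ ∀ C ∈ l, a ∈ C.sem M := by
  intro l
  induction l with
  | nil => simp [bigConj, ALC.sem]
  | cons C l ih =>
    simp only [bigConj, ALC.sem, Set.mem_inter_iff, List.mem_cons, ih]
    constructor
    · rintro ⟨h1, h2⟩ C' (rfl | hC'); exacts [h1, h2 C' hC']
    · intro h; exact ⟨h C (Or.inl rfl), fun C' hC' => h C' (Or.inr hC')⟩

lemma isHorn_bigConj {l : List (ALC Con Rol)} (h : ∀ C ∈ l, C.IsHorn) :
    (bigConj l).IsHorn := by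
  induction l with
  | nil => exact .top
  | cons C l ih =>
    exact .conj (h C List.mem_cons_self) (ih fun C' hC' => h C' (List.mem_cons_of_mem _ hC'))

lemma isELU_bigConj {l : List (ALC Con Rol)} (h : ∀ C ∈ l, C.IsELU) :
    (bigConj l).IsELU := by
  induction l with
  | nil => exact .top
  | cons C l ih =>
    exact .conj (h C List.mem_cons_self) (ih fun C' hC' => h C' (List.mem_cons_of_mem _ hC'))

lemma depth_bigConj {l : List (ALC Con Rol)} {k : ℕ} (h : ∀ C ∈ l, C.depth ≤ k) :
    (bigConj l).depth ≤ k := by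
  induction l with
  | nil => simp [bigConj, ALC.depth]
  | cons C l ih =>
    simp only [bigConj, ALC.depth, max_le_iff]
    exact ⟨h C List.mem_cons_self, ih fun C' hC' => h C' (List.mem_cons_of_mem _ hC')⟩

/-- A list enumerating a set in a finite type. -/
noncomputable def setList {α : Type} [Finite α] (s : Set α) : List α :=
  (Set.toFinite s).toFinset.toList

lemma mem_setList {α : Type} [Finite α] (s : Set α) (x : α) : x ∈ setList s ↔ x ∈ s := by
  rw [setList, Finset.mem_toList, Set.Finite.mem_toFinset]

end Aux2
section Aux3

set_option linter.unusedSectionVars false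
set_option maxHeartbeats 1000000

variable [Finite Con] [Finite Rol]

/-- Failure of `k`-round tree simulation is witnessed by an ELU-concept of depth `≤ k`. -/
lemma elu_of_not_tsim : ∀ (k : ℕ) (u t : Tr Con Rol k), ¬ tsim k u t →
    ∃ E : ALC Con Rol, E.IsELU ∧ E.depth ≤ k ∧
      (∀ {D2 : Type} (N : Str Con Rol D2) (b : D2), tp N k b = u → b ∈ E.sem N) ∧
      (∀ {D1 : Type} (M : Str Con Rol D1) (a : D1), tp M k a = t → a ∉ E.sem M) := by
  intro k
  induction k with
  | zero =>
    intro u t h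
    rw [tsim_zero] at h
    obtain ⟨A, hAu, hAt⟩ := Set.not_subset.mp h
    refine ⟨.atomic A, .atomic A, by simp [ALC.depth], ?_, ?_⟩
    · intro D2 N b hb
      show b ∈ N.conI A
      rw [← mem_lab_tp N 0, hb]; exact hAu
    · intro D1 M a ha hmem
      apply hAt
      rw [← ha, mem_lab_tp M 0]; exact hmem
  | succ k ih =>
    intro u t h
    rw [tsim_succ] at h
    by_cases h1 : lab u ⊆ lab t
    · have h2 : ∃ R, ∃ u' ∈ u.2 R, ∀ t' ∈ t.2 R, ¬ tsim k u' t' := by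
        by_contra hc
        push_neg at hc
        exact h ⟨h1, fun R u' hu' => hc R u' hu'⟩
      obtain ⟨R, u', hu', hall⟩ := h2
      have hch : ∀ t' : Tr Con Rol k, ∃ E : ALC Con Rol, E.IsELU ∧ E.depth ≤ k ∧
          (¬ tsim k u' t' →
            (∀ {D2 : Type} (N : Str Con Rol D2) (b : D2), tp N k b = u' → b ∈ E.sem N) ∧
            (∀ {D1 : Type} (M : Str Con Rol D1) (a : D1), tp M k a = t' → a ∉ E.sem M)) := by
        intro t'
        by_cases hc : tsim k u' t'
        · exact ⟨.top, .top, by simp [ALC.depth], fun hn => absurd hc hn⟩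
        · obtain ⟨E, e1, e2, e3, e4⟩ := ih u' t' hc
          exact ⟨E, e1, e2, fun _ => ⟨e3, e4⟩⟩
      choose F hF1 hF2 hF3 using hch
      refine ⟨.ex R (bigConj ((setList (t.2 R)).map F)), ?_, ?_, ?_, ?_⟩
      · exact .ex R (isELU_bigConj (by
          intro E hE
          obtain ⟨t', _, rfl⟩ := List.mem_map.mp hE
          exact hF1 t'))
      · show (bigConj ((setList (t.2 R)).map F)).depth + 1 ≤ k + 1
        have : (bigConj ((setList (t.2 R)).map F)).depth ≤ k := by
          apply depth_bigConj
          intro E hE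
          obtain ⟨t', _, rfl⟩ := List.mem_map.mp hE
          exact hF2 t'
        omega
      · intro D2 N b hb
        rw [← hb] at hu'
        obtain ⟨b', hb', htp⟩ := hu'
        refine ⟨b', hb', ?_⟩
        rw [sem_bigConj]
        intro E hE
        obtain ⟨t', ht', rfl⟩ := List.mem_map.mp hE
        exact (hF3 t' (hall t' ((mem_setList _ _).mp ht'))).1 N b' htp
      · rintro D1 M a ha ⟨a', ha', hconj⟩
        have ht' : tp M k a' ∈ t.2 R := by
          rw [← ha]; exact ⟨a', ha', rfl⟩
        rw [sem_bigConj] at hconj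
        have hmem : F (tp M k a') ∈ (setList (t.2 R)).map F :=
          List.mem_map.mpr ⟨tp M k a', (mem_setList _ _).mpr ht', rfl⟩
        exact (hF3 _ (hall _ ht')).2 M a' rfl (hconj _ hmem)
    · obtain ⟨A, hAu, hAt⟩ := Set.not_subset.mp h1
      refine ⟨.atomic A, .atomic A, by simp [ALC.depth], ?_, ?_⟩
      · intro D2 N b hb
        show b ∈ N.conI A
        rw [← mem_lab_tp N (k+1), hb]; exact hAu
      · intro D1 M a ha hmem
        apply hAt
        rw [← ha, mem_lab_tp M (k+1)]; exact hmem

/-- The ELU "cone" concept of a point relative to a set of tree types. -/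
lemma eluCone (k : ℕ) {D2 : Type} (N : Str Con Rol D2) (b : D2) (𝒞 : Set (Tr Con Rol k)) :
    ∃ E : ALC Con Rol, E.IsELU ∧ E.depth ≤ k ∧ b ∈ E.sem N ∧
      ∀ t ∈ 𝒞, t ∈ SCset k E → tsim k (tp N k b) t := by
  have hch : ∀ t : Tr Con Rol k, ∃ E : ALC Con Rol, E.IsELU ∧ E.depth ≤ k ∧
      (¬ tsim k (tp N k b) t →
        (∀ {D3 : Type} (N' : Str Con Rol D3) (b' : D3), tp N' k b' = tp N k b → b' ∈ E.sem N') ∧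
        (∀ {D1 : Type} (M : Str Con Rol D1) (a : D1), tp M k a = t → a ∉ E.sem M)) := by
    intro t
    by_cases hc : tsim k (tp N k b) t
    · exact ⟨.top, .top, by simp [ALC.depth], fun hn => absurd hc hn⟩
    · obtain ⟨E, e1, e2, e3, e4⟩ := elu_of_not_tsim k (tp N k b) t hc
      exact ⟨E, e1, e2, fun _ => ⟨e3, e4⟩⟩
  choose F hF1 hF2 hF3 using hch
  refine ⟨bigConj ((setList {t ∈ 𝒞 | ¬ tsim k (tp N k b) t}).map F), ?_, ?_, ?_, ?_⟩
  · apply isELU_bigConj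
    intro E hE
    obtain ⟨t', _, rfl⟩ := List.mem_map.mp hE
    exact hF1 t'
  · apply depth_bigConj
    intro E hE
    obtain ⟨t', _, rfl⟩ := List.mem_map.mp hE
    exact hF2 t'
  · rw [sem_bigConj]
    intro E hE
    obtain ⟨t', ht', rfl⟩ := List.mem_map.mp hE
    exact ((hF3 t' ((mem_setList _ _).mp ht').2).1 N b rfl)
  · intro t ht hSC
    by_contra hnot
    have hmem : F t ∈ (setList {t ∈ 𝒞 | ¬ tsim k (tp N k b) t}).map F :=
      List.mem_map.mpr ⟨t, (mem_setList _ _).mpr ⟨ht, hnot⟩, rfl⟩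
    have := (sem_bigConj (TSt Con Rol k) (nd k le_rfl t) _).mp hSC _ hmem
    exact (hF3 t hnot).2 (TSt Con Rol k) (nd k le_rfl t) (tp_nd k k le_rfl t) this

/-- `k`-round Horn simulation on tree types. -/
def tHS : ∀ (k : ℕ), Set (Tr Con Rol k) → Tr Con Rol k → Prop
  | 0, X, u => X.Nonempty ∧ (∀ A, (∀ t ∈ X, A ∈ lab t) → A ∈ lab u) ∧ ∀ t ∈ X, tsim 0 u t
  | (k+1), X, u =>
      (X.Nonempty ∧ (∀ A, (∀ t ∈ X, A ∈ lab t) → A ∈ lab u) ∧ ∀ t ∈ X, tsim (k+1) u t) ∧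
      (∀ R (Y : Set (Tr Con Rol k)), (∀ t ∈ X, ∃ s ∈ Y, s ∈ t.2 R) →
          ∃ Y', Y' ⊆ Y ∧ ∃ v ∈ u.2 R, tHS k Y' v) ∧
      (∀ R, ∀ v ∈ u.2 R, ∃ Y, (∀ s ∈ Y, ∃ t ∈ X, s ∈ t.2 R) ∧ tHS k Y v)

lemma tHS_zero {X : Set (Tr Con Rol 0)} {u : Tr Con Rol 0} :
    tHS 0 X u ↔ (X.Nonempty ∧ (∀ A, (∀ t ∈ X, A ∈ lab t) → A ∈ lab u) ∧
      ∀ t ∈ X, tsim 0 u t) := by rw [tHS]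

lemma tHS_succ {k : ℕ} {X : Set (Tr Con Rol (k+1))} {u : Tr Con Rol (k+1)} :
    tHS (k+1) X u ↔
      ((X.Nonempty ∧ (∀ A, (∀ t ∈ X, A ∈ lab t) → A ∈ lab u) ∧ ∀ t ∈ X, tsim (k+1) u t) ∧
      (∀ R (Y : Set (Tr Con Rol k)), (∀ t ∈ X, ∃ s ∈ Y, s ∈ t.2 R) →
          ∃ Y', Y' ⊆ Y ∧ ∃ v ∈ u.2 R, tHS k Y' v) ∧
      (∀ R, ∀ v ∈ u.2 R, ∃ Y, (∀ s ∈ Y, ∃ t ∈ X, s ∈ t.2 R) ∧ tHS k Y v)) := by rw [tHS]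

lemma tHS_base {k : ℕ} {X : Set (Tr Con Rol k)} {u : Tr Con Rol k} (h : tHS k X u) :
    X.Nonempty ∧ (∀ A, (∀ t ∈ X, A ∈ lab t) → A ∈ lab u) ∧ ∀ t ∈ X, tsim k u t := by
  cases k with
  | zero => exact tHS_zero.mp h
  | succ k => exact (tHS_succ.mp h).1

end Aux3
section Aux4

set_option linter.unusedSectionVars false
set_option maxHeartbeats 1000000

variable [Finite Con] [Finite Rol]

lemma simL0_of_tsim {M : Str Con Rol D1} {N : Str Con Rol D2} {k : ℕ} {b : D2} {a : D1}
    (h : tsim k (tp N k b) (tp M k a)) : SimL N M 0 b a := by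
  intro A hA
  have := tsim_lab h ((mem_lab_tp N k b A).mpr hA)
  exact (mem_lab_tp M k a A).mp this

/-- Transfer: tree-level Horn simulation to structure-level (with exact type image). -/
lemma hornSimL_of_tHS (M : Str Con Rol D1) (N : Str Con Rol D2) :
    ∀ (k : ℕ) (X : Set D1) (b : D2),
      tHS k (tp M k '' X) (tp N k b) → HornSimL M N k X b := by
  intro k
  induction k with
  | zero =>
    intro X b h
    obtain ⟨hne, hat, hsim⟩ := tHS_zero.mp h
    refine ⟨?_, ?_, ?_⟩
    · obtain ⟨t, a, ha, rfl⟩ := hne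
      exact ⟨a, ha⟩
    · intro A hA
      have : A ∈ lab (tp N 0 b) := by
        apply hat
        rintro t ⟨a, ha, rfl⟩
        exact (mem_lab_tp M 0 a A).mpr (hA ha)
      exact (mem_lab_tp N 0 b A).mp this
    · intro a ha
      exact simL0_of_tsim (k := 0) (hsim _ ⟨a, ha, rfl⟩)
  | succ k ih =>
    intro X b h
    obtain ⟨⟨hne, hat, hsim⟩, hforth, hback⟩ := tHS_succ.mp h
    refine ⟨⟨?_, ?_, ?_⟩, ?_, ?_, ?_⟩
    · obtain ⟨t, a, ha, rfl⟩ := hne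
      exact ⟨a, ha⟩
    · intro A hA
      have : A ∈ lab (tp N (k+1) b) := by
        apply hat
        rintro t ⟨a, ha, rfl⟩
        exact (mem_lab_tp M (k+1) a A).mpr (hA ha)
      exact (mem_lab_tp N (k+1) b A).mp this
    · intro a ha
      exact simL0_of_tsim (hsim _ ⟨a, ha, rfl⟩)
    · -- forth
      intro R Y hup
      have hup' : ∀ t ∈ tp M (k+1) '' X,
          ∃ s ∈ tp M k '' {y ∈ Y | ∃ a ∈ X, (a, y) ∈ M.rolI R}, s ∈ t.2 R := by
        rintro t ⟨a, ha, rfl⟩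
        obtain ⟨y, hy, hedge⟩ := hup a ha
        exact ⟨tp M k y, ⟨y, ⟨hy, a, ha, hedge⟩, rfl⟩, ⟨y, hedge, rfl⟩⟩
      obtain ⟨Y', hY'sub, v, hv, hHS⟩ := hforth R _ hup'
      obtain ⟨b', hb', htpb'⟩ := hv
      set Y'' : Set D1 := {y ∈ Y | (∃ a ∈ X, (a, y) ∈ M.rolI R) ∧ tp M k y ∈ Y'} with hY''
      have himg : tp M k '' Y'' = Y' := by
        apply Set.Subset.antisymm
        · rintro s ⟨y, ⟨_, _, hyY'⟩, rfl⟩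
          exact hyY'
        · intro s hs
          obtain ⟨y, ⟨hy1, hy2⟩, rfl⟩ := hY'sub hs
          exact ⟨y, ⟨hy1, hy2, hs⟩, rfl⟩
      refine ⟨Y'', fun y hy => hy.1, b', hb', ?_⟩
      apply ih
      rw [himg, htpb']
      exact hHS
    · -- back
      intro R b' hb'
      have hv : tp N k b' ∈ (tp N (k+1) b).2 R := ⟨b', hb', rfl⟩
      obtain ⟨Y, hdown, hHS⟩ := hback R _ hv
      set Y₁ : Set D1 := {y | (∃ a ∈ X, (a, y) ∈ M.rolI R) ∧ tp M k y ∈ Y} with hY₁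
      have himg : tp M k '' Y₁ = Y := by
        apply Set.Subset.antisymm
        · rintro s ⟨y, ⟨_, hy2⟩, rfl⟩
          exact hy2
        · intro s hs
          obtain ⟨t, ⟨a, ha, rfl⟩, hst⟩ := hdown s hs
          obtain ⟨a', hedge, rfl⟩ := hst
          exact ⟨a', ⟨⟨a, ha, hedge⟩, hs⟩, rfl⟩
      refine ⟨Y₁, ?_, ?_⟩
      · rintro y ⟨⟨a, ha, hedge⟩, _⟩
        exact ⟨a, ha, hedge⟩
      · apply ih
        rw [himg]
        exact hHS
    · intro a ha
      rw [simL_iff_tsim]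
      exact hsim _ ⟨a, ha, rfl⟩

/-- Transfer: structure-level Horn simulation to tree level. -/
lemma tHS_of_hornSimL (M : Str Con Rol D1) (N : Str Con Rol D2) :
    ∀ (k : ℕ) (X : Set D1) (b : D2),
      HornSimL M N k X b → tHS k (tp M k '' X) (tp N k b) := by
  intro k
  induction k with
  | zero =>
    intro X b h
    obtain ⟨hne, hat, hsim⟩ := h
    rw [tHS_zero]
    refine ⟨hne.image _, ?_, ?_⟩
    · intro A hA
      rw [mem_lab_tp]
      apply hat
      intro a ha
      exact (mem_lab_tp M 0 a A).mp (hA _ ⟨a, ha, rfl⟩)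
    · rintro t ⟨a, ha, rfl⟩
      rw [← simL_iff_tsim]
      exact hsim a ha
  | succ k ih =>
    intro X b h
    obtain ⟨⟨hne, hat, hsim0⟩, hforth, hback, hsim⟩ := h
    rw [tHS_succ]
    refine ⟨⟨hne.image _, ?_, ?_⟩, ?_, ?_⟩
    · intro A hA
      rw [mem_lab_tp]
      apply hat
      intro a ha
      exact (mem_lab_tp M (k+1) a A).mp (hA _ ⟨a, ha, rfl⟩)
    · rintro t ⟨a, ha, rfl⟩
      rw [← simL_iff_tsim]
      exact hsim a ha
    · -- forth
      intro R 𝒴 hup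
      set Y : Set D1 := {a' | (∃ a ∈ X, (a, a') ∈ M.rolI R) ∧ tp M k a' ∈ 𝒴} with hY
      have hupY : relUp (M.rolI R) X Y := by
        intro a ha
        obtain ⟨s, hs, hst⟩ := hup (tp M (k+1) a) ⟨a, ha, rfl⟩
        obtain ⟨a', hedge, rfl⟩ := hst
        exact ⟨a', ⟨⟨a, ha, hedge⟩, hs⟩, hedge⟩
      obtain ⟨Y', hY'Y, b', hb', hHS⟩ := hforth R Y hupY
      refine ⟨tp M k '' Y', ?_, tp N k b', ⟨b', hb', rfl⟩, ih Y' b' hHS⟩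
      rintro s ⟨y, hy, rfl⟩
      exact (hY'Y hy).2
    · -- back
      intro R v hv
      obtain ⟨b', hb', rfl⟩ := hv
      obtain ⟨Y, hdown, hHS⟩ := hback R b' hb'
      refine ⟨tp M k '' Y, ?_, ih Y b' hHS⟩
      rintro s ⟨y, hy, rfl⟩
      obtain ⟨a, ha, hedge⟩ := hdown y hy
      exact ⟨tp M (k+1) a, ⟨a, ha, rfl⟩, ⟨y, hedge, rfl⟩⟩

end Aux4
section Aux5

set_option linter.unusedSectionVars false
set_option maxHeartbeats 1000000

variable [Finite Con] [Finite Rol]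

/-- The base clauses of the main lemma. -/
lemma star_base {D2 : Type} (N : Str Con Rol D2) (k : ℕ) (b : D2) (𝒞 : Set (Tr Con Rol k))
    (hyp : ∀ K : ALC Con Rol, K.IsHorn → K.depth ≤ k → 𝒞 ⊆ SCset k K → b ∈ K.sem N) :
    ({t | t ∈ 𝒞 ∧ tsim k (tp N k b) t}).Nonempty ∧
    (∀ A, (∀ t ∈ {t | t ∈ 𝒞 ∧ tsim k (tp N k b) t}, A ∈ lab t) → A ∈ lab (tp N k b)) ∧
    (∀ t ∈ {t | t ∈ 𝒞 ∧ tsim k (tp N k b) t}, tsim k (tp N k b) t) := by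
  obtain ⟨E, hE1, hE2, hEb, hEkey⟩ := eluCone k N b 𝒞
  refine ⟨?_, ?_, fun t ht => ht.2⟩
  · -- nonemptiness
    by_contra hne
    rw [Set.not_nonempty_iff_eq_empty] at hne
    have hK : 𝒞 ⊆ SCset k (.impl E .bot) := by
      intro t ht
      show nd k le_rfl t ∈ (ALC.impl E .bot).sem (TSt Con Rol k)
      left
      intro hmem
      have : t ∈ {t | t ∈ 𝒞 ∧ tsim k (tp N k b) t} := ⟨ht, hEkey t ht hmem⟩
      rw [hne] at this
      exact this
    have hb := hyp (.impl E .bot) (.impl hE1 .bot) (by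
      simp only [ALC.depth, max_le_iff]; exact ⟨hE2, Nat.zero_le k⟩) hK
    rcases hb with hb | hb
    · exact hb hEb
    · exact hb
  · -- atoms
    intro A hA
    have hK : 𝒞 ⊆ SCset k (.impl E (.atomic A)) := by
      intro t ht
      show nd k le_rfl t ∈ (ALC.impl E (.atomic A)).sem (TSt Con Rol k)
      by_cases hmem : nd k le_rfl t ∈ E.sem (TSt Con Rol k)
      · right
        have htX : t ∈ {t | t ∈ 𝒞 ∧ tsim k (tp N k b) t} := ⟨ht, hEkey t ht hmem⟩
        exact hA t htX
      · exact Or.inl hmem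
    have hb := hyp (.impl E (.atomic A)) (.impl hE1 (.atomic A)) (by
      simp only [ALC.depth, max_le_iff]; exact ⟨hE2, Nat.zero_le k⟩) hK
    rcases hb with hb | hb
    · exact absurd hEb hb
    · exact (mem_lab_tp N k b A).mpr hb

/-- **Main lemma**: a point satisfying all depth-`≤ k` Horn consequences of a set of
tree types is `k`-round Horn simulated by a subset of it. -/
lemma star {D2 : Type} (N : Str Con Rol D2) :
    ∀ (k : ℕ) (b : D2) (𝒞 : Set (Tr Con Rol k)),
      (∀ K : ALC Con Rol, K.IsHorn → K.depth ≤ k → 𝒞 ⊆ SCset k K → b ∈ K.sem N) →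
      tHS k {t | t ∈ 𝒞 ∧ tsim k (tp N k b) t} (tp N k b) := by
  intro k
  induction k with
  | zero =>
    intro b 𝒞 hyp
    rw [tHS_zero]
    exact star_base N 0 b 𝒞 hyp
  | succ k ih =>
    intro b 𝒞 hyp
    rw [tHS_succ]
    obtain ⟨E, hE1, hE2, hEb, hEkey⟩ := eluCone (k+1) N b 𝒞
    refine ⟨star_base N (k+1) b 𝒞 hyp, ?_, ?_⟩
    · -- forth
      intro R Y hup
      have claim : ∃ v ∈ (tp N (k+1) b).2 R,
          ∀ K : ALC Con Rol, K.IsHorn → K.depth ≤ k → Y ⊆ SCset k K → v ∈ SCset k K := by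
        by_contra hc
        have hch : ∀ v : Tr Con Rol k, ∃ K : ALC Con Rol, K.IsHorn ∧ K.depth ≤ k ∧
            ((v ∈ (tp N (k+1) b).2 R ∧ ¬ (∀ K' : ALC Con Rol, K'.IsHorn → K'.depth ≤ k →
                Y ⊆ SCset k K' → v ∈ SCset k K')) →
              (Y ⊆ SCset k K ∧ v ∉ SCset k K)) := by
          intro v
          by_cases hv : v ∈ (tp N (k+1) b).2 R ∧ ¬ (∀ K' : ALC Con Rol, K'.IsHorn →
              K'.depth ≤ k → Y ⊆ SCset k K' → v ∈ SCset k K')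
          · push_neg at hv
            obtain ⟨K, hK1, hK2, hK3, hK4⟩ := hv.2
            exact ⟨K, hK1, hK2, fun _ => ⟨hK3, hK4⟩⟩
          · exact ⟨.top, .top, Nat.zero_le k, fun h => absurd h hv⟩
        choose G hG1 hG2 hG3 using hch
        set Hstar := bigConj ((setList ((tp N (k+1) b).2 R)).map G) with hHstar
        have hHstarHorn : Hstar.IsHorn := by
          apply isHorn_bigConj
          intro K hK
          obtain ⟨v, _, rfl⟩ := List.mem_map.mp hK
          exact hG1 v
        have hHstarDepth : Hstar.depth ≤ k := by
          apply depth_bigConj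
          intro K hK
          obtain ⟨v, _, rfl⟩ := List.mem_map.mp hK
          exact hG2 v
        set K0 : ALC Con Rol := .impl E (.ex R Hstar) with hK0
        have hK0Horn : K0.IsHorn := .impl hE1 (.ex R hHstarHorn)
        have hK0Depth : K0.depth ≤ k + 1 := by
          simp only [hK0, ALC.depth, max_le_iff]
          exact ⟨hE2, by omega⟩
        have h𝒞 : 𝒞 ⊆ SCset (k+1) K0 := by
          intro t ht
          show nd (k+1) le_rfl t ∈ (ALC.impl E (.ex R Hstar)).sem (TSt Con Rol (k+1))
          by_cases hmem : nd (k+1) le_rfl t ∈ E.sem (TSt Con Rol (k+1))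
          · right
            have htX : t ∈ {t | t ∈ 𝒞 ∧ tsim (k+1) (tp N (k+1) b) t} := ⟨ht, hEkey t ht hmem⟩
            obtain ⟨s, hsY, hst⟩ := hup t htX
            have hk' : k ≤ k + 1 := Nat.le_succ k
            refine ⟨nd (k+1) hk' s, edge_intro le_rfl hk' R hst, ?_⟩
            rw [sem_bigConj]
            intro K hK
            obtain ⟨v, hv, rfl⟩ := List.mem_map.mp hK
            have hvmem : v ∈ (tp N (k+1) b).2 R := (mem_setList _ _).mp hv
            by_cases hgood : ∀ K' : ALC Con Rol, K'.IsHorn → K'.depth ≤ k →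
                Y ⊆ SCset k K' → v ∈ SCset k K'
            · exact absurd (⟨v, hvmem, hgood⟩ :
                  ∃ v ∈ (tp N (k+1) b).2 R, ∀ K' : ALC Con Rol, K'.IsHorn →
                    K'.depth ≤ k → Y ⊆ SCset k K' → v ∈ SCset k K') hc
            · have hspec := hG3 v ⟨hvmem, hgood⟩
              have : s ∈ SCset k (G v) := hspec.1 hsY
              have := (mem_SCset (hG2 v) (TSt Con Rol (k+1)) (nd (k+1) hk' s)).mpr
                (by rw [tp_nd]; exact this)
              exact this
          · exact Or.inl hmem
        have hb := hyp K0 hK0Horn hK0Depth h𝒞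
        rcases hb with hb | hb
        · exact hb hEb
        · obtain ⟨b', hb', hbH⟩ := hb
          have hv0 : tp N k b' ∈ (tp N (k+1) b).2 R := ⟨b', hb', rfl⟩
          by_cases hgood : ∀ K' : ALC Con Rol, K'.IsHorn → K'.depth ≤ k →
              Y ⊆ SCset k K' → tp N k b' ∈ SCset k K'
          · exact absurd (⟨tp N k b', hv0, hgood⟩ :
                ∃ v ∈ (tp N (k+1) b).2 R, ∀ K' : ALC Con Rol, K'.IsHorn →
                  K'.depth ≤ k → Y ⊆ SCset k K' → v ∈ SCset k K') hc
          · have hspec := hG3 (tp N k b') ⟨hv0, hgood⟩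
            rw [sem_bigConj] at hbH
            have hmem : G (tp N k b') ∈ (setList ((tp N (k+1) b).2 R)).map G :=
              List.mem_map.mpr ⟨tp N k b', (mem_setList _ _).mpr hv0, rfl⟩
            have := (mem_SCset (hG2 (tp N k b')) N b').mp (hbH _ hmem)
            exact hspec.2 this
      obtain ⟨v, hvmem, hvhyp⟩ := claim
      obtain ⟨b', hb', htpb'⟩ := hvmem
      have hyp' : ∀ K : ALC Con Rol, K.IsHorn → K.depth ≤ k → Y ⊆ SCset k K →
          b' ∈ K.sem N := by
        intro K hK1 hK2 hK3
        have := hvhyp K hK1 hK2 hK3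
        rw [← htpb'] at this
        exact (mem_SCset hK2 N b').mpr this
      have hIH := ih b' Y hyp'
      refine ⟨{s | s ∈ Y ∧ tsim k (tp N k b') s}, fun s hs => hs.1, tp N k b',
        ⟨b', hb', rfl⟩, hIH⟩
    · -- back
      intro R v hv
      obtain ⟨b', hb', rfl⟩ := hv
      set 𝒞' : Set (Tr Con Rol k) :=
        {s | ∃ t, (t ∈ 𝒞 ∧ tsim (k+1) (tp N (k+1) b) t) ∧ s ∈ t.2 R} with h𝒞'
      have hyp' : ∀ K : ALC Con Rol, K.IsHorn → K.depth ≤ k → 𝒞' ⊆ SCset k K →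
          b' ∈ K.sem N := by
        intro K hK1 hK2 hK3
        set K0 : ALC Con Rol := .impl E (.all R K) with hK0
        have hK0Horn : K0.IsHorn := .impl hE1 (.all R hK1)
        have hK0Depth : K0.depth ≤ k + 1 := by
          simp only [hK0, ALC.depth, max_le_iff]
          exact ⟨hE2, by omega⟩
        have h𝒞 : 𝒞 ⊆ SCset (k+1) K0 := by
          intro t ht
          show nd (k+1) le_rfl t ∈ (ALC.impl E (.all R K)).sem (TSt Con Rol (k+1))
          by_cases hmem : nd (k+1) le_rfl t ∈ E.sem (TSt Con Rol (k+1))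
          · right
            intro y hy
            obtain ⟨s, hks, rfl, hst⟩ := edge_elim hy
            have hs𝒞' : s ∈ 𝒞' := ⟨t, ⟨ht, hEkey t ht hmem⟩, hst⟩
            have := hK3 hs𝒞'
            exact (mem_SCset hK2 (TSt Con Rol (k+1)) (nd (k+1) hks s)).mpr
              (by rw [tp_nd]; exact this)
          · exact Or.inl hmem
        have hb := hyp K0 hK0Horn hK0Depth h𝒞
        rcases hb with hb | hb
        · exact absurd hEb hb
        · exact hb b' hb'
      have hIH := ih b' 𝒞' hyp'
      exact ⟨{s | s ∈ 𝒞' ∧ tsim k (tp N k b') s}, fun s hs => hs.1, hIH⟩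

end Aux5
section Aux6

set_option linter.unusedSectionVars false
set_option maxHeartbeats 1000000

variable [Finite Con] [Finite Rol]

/-- ELU-concepts are preserved under simulations. -/
lemma elu_sound {M : Str Con Rol D1} {N : Str Con Rol D2} {S : Set (D1 × D2)}
    (hS : IsSim M N S) :
    ∀ {E : ALC Con Rol}, E.IsELU → ∀ a b, (a, b) ∈ S → a ∈ E.sem M → b ∈ E.sem N := by
  intro E hE
  induction hE with
  | top => intro a b _ _; trivial
  | atomic A => intro a b hab ha; exact (hS a b hab).1 A ha
  | conj h1 h2 ih1 ih2 =>
    rintro a b hab ⟨hx, hy⟩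
    exact ⟨ih1 a b hab hx, ih2 a b hab hy⟩
  | disj h1 h2 ih1 ih2 =>
    rintro a b hab (hx | hy)
    · exact Or.inl (ih1 a b hab hx)
    · exact Or.inr (ih2 a b hab hy)
  | ex R h ih =>
    rintro a b hab ⟨a', ha', hma⟩
    obtain ⟨b', hb', hab'⟩ := (hS a b hab).2 R a' ha'
    exact ⟨b', hb', ih a' b' hab' hma⟩

/-- hornALC-concepts are preserved under Horn simulations. -/
lemma horn_sound {M : Str Con Rol D1} {N : Str Con Rol D2} {Z : Set (Set D1 × D2)}
    (hZ : IsHornSim M N Z) :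
    ∀ {H : ALC Con Rol}, H.IsHorn → ∀ X b, (X, b) ∈ Z → X ⊆ H.sem M → b ∈ H.sem N := by
  intro H hH
  induction hH with
  | bot =>
    intro X b hXb hsub
    obtain ⟨a, ha⟩ := (hZ X b hXb).1
    exact absurd (hsub ha) (fun h => h)
  | top => intro X b _ _; trivial
  | atomic A =>
    intro X b hXb hsub
    exact (hZ X b hXb).2.1 A hsub
  | conj h1 h2 ih1 ih2 =>
    intro X b hXb hsub
    exact ⟨ih1 X b hXb fun a ha => (hsub ha).1, ih2 X b hXb fun a ha => (hsub ha).2⟩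
  | @impl L H' hL hH' ih =>
    intro X b hXb hsub
    by_cases hb : b ∈ L.sem N
    · right
      apply ih X b hXb
      intro a ha
      obtain ⟨S, hS, hmem⟩ := (hZ X b hXb).2.2.2.2 a ha
      have haL : a ∈ L.sem M := elu_sound hS hL b a hmem hb
      rcases hsub ha with h | h
      · exact absurd haL h
      · exact h
    · exact Or.inl hb
  | @ex R H' hH' ih =>
    intro X b hXb hsub
    have hup : relUp (M.rolI R) X (H'.sem M) := by
      intro a ha
      obtain ⟨a', ha', hma⟩ := hsub ha
      exact ⟨a', hma, ha'⟩
    obtain ⟨Y', hY', b', hb', hYb'⟩ := (hZ X b hXb).2.2.1 R _ hup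
    exact ⟨b', hb', ih Y' b' hYb' hY'⟩
  | @all R H' hH' ih =>
    intro X b hXb hsub
    intro b' hb'
    obtain ⟨Y, hdown, hYb'⟩ := (hZ X b hXb).2.2.2.1 R b' hb'
    apply ih Y b' hYb'
    intro y hy
    obtain ⟨a, ha, hedge⟩ := hdown y hy
    exact hsub ha y hedge

/-- An `ℓ`-round tree Horn simulation yields a genuine Horn simulation between copies
of the canonical structure. -/
lemma hornSim_TSt_of_tHS (ℓ : ℕ) {𝒳 : Set (Tr Con Rol ℓ)} {u : Tr Con Rol ℓ}
    (h : tHS ℓ 𝒳 u) :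
    HornSim (TSt Con Rol ℓ) (TSt Con Rol ℓ)
      ((fun t => nd ℓ le_rfl t) '' 𝒳) (nd ℓ le_rfl u) := by
  refine ⟨{p | ∃ (k : ℕ) (hk : k ≤ ℓ) (W : Set (Tr Con Rol k)) (v : Tr Con Rol k),
      tHS k W v ∧ p.1 = (fun t => nd ℓ hk t) '' W ∧ p.2 = nd ℓ hk v}, ?_,
      ⟨ℓ, le_rfl, 𝒳, u, h, rfl, rfl⟩⟩
  rintro X b ⟨k, hk, W, v, hWv, hX, hb⟩
  subst hX; subst hb
  obtain ⟨hne, hat, hsim⟩ := tHS_base hWv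
  refine ⟨?_, ?_, ?_, ?_, ?_⟩
  · obtain ⟨t, ht⟩ := hne
    exact ⟨nd ℓ hk t, t, ht, rfl⟩
  · intro A hA
    show A ∈ lab v
    apply hat
    intro t ht
    exact hA ⟨t, ht, rfl⟩
  · -- forth
    intro R Y hup
    cases k with
    | zero =>
      exfalso
      obtain ⟨t0, ht0⟩ := hne
      obtain ⟨y, _, hedge⟩ := hup (nd ℓ hk t0) ⟨t0, ht0, rfl⟩
      exact edge_elim0 hedge
    | succ k =>
      have hk' : k ≤ ℓ := Nat.le_of_succ_le hk
      have hup' : ∀ t ∈ W, ∃ s ∈ {s : Tr Con Rol k | nd ℓ hk' s ∈ Y}, s ∈ t.2 R := by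
        intro t ht
        obtain ⟨y, hy, hedge⟩ := hup (nd ℓ hk t) ⟨t, ht, rfl⟩
        obtain ⟨s, hks, rfl, hmem⟩ := edge_elim hedge
        exact ⟨s, hy, hmem⟩
      obtain ⟨Y', hY'sub, v', hv', hHS⟩ := (tHS_succ.mp hWv).2.1 R _ hup'
      refine ⟨(fun s => nd ℓ hk' s) '' Y', ?_, nd ℓ hk' v',
        edge_intro hk hk' R hv', ⟨k, hk', Y', v', hHS, rfl, rfl⟩⟩
      rintro y ⟨s, hs, rfl⟩
      exact hY'sub hs
  · -- back
    intro R b' hb'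
    cases k with
    | zero => exact absurd hb' (fun hc => edge_elim0 hc)
    | succ k =>
      have hk' : k ≤ ℓ := Nat.le_of_succ_le hk
      obtain ⟨s, hks, rfl, hmem⟩ := edge_elim hb'
      obtain ⟨Y, hdown, hHS⟩ := (tHS_succ.mp hWv).2.2 R s hmem
      refine ⟨(fun s' => nd ℓ hk' s') '' Y, ?_, ⟨k, hk', Y, s, hHS, rfl, rfl⟩⟩
      rintro y ⟨sy, hsy, rfl⟩
      obtain ⟨t, ht, hst⟩ := hdown sy hsy
      exact ⟨nd ℓ hk t, ⟨t, ht, rfl⟩, edge_intro hk hk' R hst⟩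
  · rintro a ⟨t, ht, rfl⟩
    exact sim_of_tsim ℓ hk (hsim t ht)

end Aux6
section Aux7

set_option linter.unusedSectionVars false
set_option maxHeartbeats 1000000

variable [Finite Con] [Finite Rol]

lemma impl_one_two {C H : ALC Con Rol} (hH : H.IsHorn) (hEq : ConceptEquiv C H) :
    PreservedHorn C := by
  intro D1 D2 _ _ M N X b hX hHS
  obtain ⟨Z, hZ, hXb⟩ := hHS
  have : b ∈ H.sem N := horn_sound hZ hH X b hXb (by rw [← hEq D1 M]; exact hX)
  rw [hEq D2 N]
  exact this

lemma impl_one_two_fin {C H : ALC Con Rol} (hH : H.IsHorn) (hEq : ConceptEquivFin C H) :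
    PreservedHornFin C := by
  intro D1 D2 _ _ _ _ M N X b hX hHS
  obtain ⟨Z, hZ, hXb⟩ := hHS
  have : b ∈ H.sem N := horn_sound hZ hH X b hXb (by rw [← hEq D1 M]; exact hX)
  rw [hEq D2 N]
  exact this

lemma impl_two_three {C : ALC Con Rol} {ℓ : ℕ} (hd : C.depth ≤ ℓ) (h2 : PreservedHorn C) :
    PreservedHornL C ℓ := by
  intro D1 D2 _ _ M N X b hX hsim
  have hT := tHS_of_hornSimL M N ℓ X b hsim
  have hHS := hornSim_TSt_of_tHS ℓ hT
  have hsub : (fun t => nd ℓ le_rfl t) '' (tp M ℓ '' X) ⊆ C.sem (TSt Con Rol ℓ) := by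
    rintro x ⟨t, ⟨a, ha, rfl⟩, rfl⟩
    exact (mem_SCset hd M a).mp (hX ha)
  have := h2 (TD Con Rol ℓ) (TD Con Rol ℓ) (TSt Con Rol ℓ) (TSt Con Rol ℓ) _ _ hsub hHS
  exact (mem_SCset hd N b).mpr this

lemma impl_two_three_fin {C : ALC Con Rol} {ℓ : ℕ} (hd : C.depth ≤ ℓ)
    (h2 : PreservedHornFin C) : PreservedHornLFin C ℓ := by
  intro D1 D2 _ _ _ _ M N X b hX hsim
  have hT := tHS_of_hornSimL M N ℓ X b hsim
  have hHS := hornSim_TSt_of_tHS ℓ hT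
  have hsub : (fun t => nd ℓ le_rfl t) '' (tp M ℓ '' X) ⊆ C.sem (TSt Con Rol ℓ) := by
    rintro x ⟨t, ⟨a, ha, rfl⟩, rfl⟩
    exact (mem_SCset hd M a).mp (hX ha)
  have := h2 (TD Con Rol ℓ) (TD Con Rol ℓ) (TSt Con Rol ℓ) (TSt Con Rol ℓ) _ _ hsub hHS
  exact (mem_SCset hd N b).mpr this

/-- Existence of the conjunction of (representatives of) all depth-`≤ ℓ` Horn
consequences of `C`. -/
lemma horn_consequence_conj (C : ALC Con Rol) (ℓ : ℕ) :
    ∃ H : ALC Con Rol, H.IsHorn ∧ H.depth ≤ ℓ ∧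
      (∀ {D : Type} (M : Str Con Rol D) (b : D),
        (b ∈ H.sem M ↔ ∀ K : ALC Con Rol, K.IsHorn → K.depth ≤ ℓ →
          SCset ℓ C ⊆ SCset ℓ K → b ∈ K.sem M)) := by
  classical
  set P : Set (Set (Tr Con Rol ℓ)) :=
    {S | ∃ K : ALC Con Rol, K.IsHorn ∧ K.depth ≤ ℓ ∧ SCset ℓ K = S ∧ SCset ℓ C ⊆ S} with hP
  have hch : ∀ S : Set (Tr Con Rol ℓ), ∃ K : ALC Con Rol, K.IsHorn ∧ K.depth ≤ ℓ ∧
      (S ∈ P → (SCset ℓ K = S ∧ SCset ℓ C ⊆ S)) := by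
    intro S
    by_cases hS : S ∈ P
    · obtain ⟨K, hK1, hK2, hK3, hK4⟩ := hS
      exact ⟨K, hK1, hK2, fun _ => ⟨hK3, hK4⟩⟩
    · exact ⟨.top, .top, Nat.zero_le ℓ, fun h => absurd h hS⟩
  choose F hF1 hF2 hF3 using hch
  refine ⟨bigConj ((setList P).map F), ?_, ?_, ?_⟩
  · apply isHorn_bigConj
    intro K hK
    obtain ⟨S, _, rfl⟩ := List.mem_map.mp hK
    exact hF1 S
  · apply depth_bigConj
    intro K hK
    obtain ⟨S, _, rfl⟩ := List.mem_map.mp hK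
    exact hF2 S
  · intro D M b
    constructor
    · intro hb K hK1 hK2 hKsub
      have hPS : SCset ℓ K ∈ P := ⟨K, hK1, hK2, rfl, hKsub⟩
      have hmem : F (SCset ℓ K) ∈ (setList P).map F :=
        List.mem_map.mpr ⟨SCset ℓ K, (mem_setList _ _).mpr hPS, rfl⟩
      have hbF := (sem_bigConj M b _).mp hb _ hmem
      have := (mem_SCset (hF2 _) M b).mp hbF
      rw [(hF3 _ hPS).1] at this
      exact (mem_SCset hK2 M b).mpr this
    · intro hb
      rw [sem_bigConj]
      intro K hK
      obtain ⟨S, hS, rfl⟩ := List.mem_map.mp hK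
      have hPS : S ∈ P := (mem_setList _ _).mp hS
      obtain ⟨hFS, hCS⟩ := hF3 S hPS
      apply (mem_SCset (hF2 S) M b).mpr
      rw [hFS]
      obtain ⟨K', hK'1, hK'2, hK'3, hK'4⟩ := hPS
      have hbK' : b ∈ K'.sem M := hb K' hK'1 hK'2 (by rw [hK'3]; exact hK'4)
      have hmem' := (mem_SCset hK'2 M b).mp hbK'
      rw [hK'3] at hmem'
      exact hmem'

lemma impl_three_four {C : ALC Con Rol} {ℓ : ℕ} (hd : C.depth ≤ ℓ)
    (h3 : PreservedHornL C ℓ) :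
    ∃ H : ALC Con Rol, H.IsHorn ∧ H.depth ≤ ℓ ∧ ConceptEquiv C H := by
  obtain ⟨H, hH1, hH2, hHsem⟩ := horn_consequence_conj C ℓ
  refine ⟨H, hH1, hH2, ?_⟩
  intro D _ M
  ext b
  constructor
  · intro hb
    rw [hHsem M b]
    intro K _ hK2 hKsub
    exact (mem_SCset hK2 M b).mpr (hKsub ((mem_SCset hd M b).mp hb))
  · intro hb
    have hyp : ∀ K : ALC Con Rol, K.IsHorn → K.depth ≤ ℓ →
        SCset ℓ C ⊆ SCset ℓ K → b ∈ K.sem M := (hHsem M b).mp hb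
    have hstar := star M ℓ b (SCset ℓ C) hyp
    set 𝒳₀ : Set (Tr Con Rol ℓ) := {t | t ∈ SCset ℓ C ∧ tsim ℓ (tp M ℓ b) t} with h𝒳₀
    have himg : tp (TSt Con Rol ℓ) ℓ '' ((fun t => nd ℓ le_rfl t) '' 𝒳₀) = 𝒳₀ := by
      ext s
      constructor
      · rintro ⟨x, ⟨t, ht, rfl⟩, rfl⟩
        rw [tp_nd]
        exact ht
      · intro hs
        exact ⟨nd ℓ le_rfl s, ⟨s, hs, rfl⟩, tp_nd ℓ ℓ le_rfl s⟩
    have hHSL : HornSimL (TSt Con Rol ℓ) M ℓ ((fun t => nd ℓ le_rfl t) '' 𝒳₀) b := by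
      apply hornSimL_of_tHS
      rw [himg]
      exact hstar
    have hsub : (fun t => nd ℓ le_rfl t) '' 𝒳₀ ⊆ C.sem (TSt Con Rol ℓ) := by
      rintro x ⟨t, ht, rfl⟩
      exact ht.1
    exact h3 (TD Con Rol ℓ) D (TSt Con Rol ℓ) M _ b hsub hHSL

lemma impl_three_four_fin {C : ALC Con Rol} {ℓ : ℕ} (hd : C.depth ≤ ℓ)
    (h3 : PreservedHornLFin C ℓ) :
    ∃ H : ALC Con Rol, H.IsHorn ∧ H.depth ≤ ℓ ∧ ConceptEquivFin C H := by
  obtain ⟨H, hH1, hH2, hHsem⟩ := horn_consequence_conj C ℓ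
  refine ⟨H, hH1, hH2, ?_⟩
  intro D _ _ M
  ext b
  constructor
  · intro hb
    rw [hHsem M b]
    intro K _ hK2 hKsub
    exact (mem_SCset hK2 M b).mpr (hKsub ((mem_SCset hd M b).mp hb))
  · intro hb
    have hyp : ∀ K : ALC Con Rol, K.IsHorn → K.depth ≤ ℓ →
        SCset ℓ C ⊆ SCset ℓ K → b ∈ K.sem M := (hHsem M b).mp hb
    have hstar := star M ℓ b (SCset ℓ C) hyp
    set 𝒳₀ : Set (Tr Con Rol ℓ) := {t | t ∈ SCset ℓ C ∧ tsim ℓ (tp M ℓ b) t} with h𝒳₀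
    have himg : tp (TSt Con Rol ℓ) ℓ '' ((fun t => nd ℓ le_rfl t) '' 𝒳₀) = 𝒳₀ := by
      ext s
      constructor
      · rintro ⟨x, ⟨t, ht, rfl⟩, rfl⟩
        rw [tp_nd]
        exact ht
      · intro hs
        exact ⟨nd ℓ le_rfl s, ⟨s, hs, rfl⟩, tp_nd ℓ ℓ le_rfl s⟩
    have hHSL : HornSimL (TSt Con Rol ℓ) M ℓ ((fun t => nd ℓ le_rfl t) '' 𝒳₀) b := by
      apply hornSimL_of_tHS
      rw [himg]
      exact hstar
    have hsub : (fun t => nd ℓ le_rfl t) '' 𝒳₀ ⊆ C.sem (TSt Con Rol ℓ) := by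
      rintro x ⟨t, ht, rfl⟩
      exact ht.1
    exact h3 (TD Con Rol ℓ) D (TSt Con Rol ℓ) M _ b hsub hHSL

end Aux7
/-- **Expressive completeness for hornALC-concepts.**
For an ALC-concept `C` of depth `ℓ` over a finite vocabulary, the following are
equivalent (both classically and in the finite-model-theory setting):
(1) `C` is equivalent to a hornALC-concept; (2) `C` is preserved under Horn simulations;
(3) `C` is preserved under ℓ-Horn simulations; (4) `C` is equivalent to a
hornALC-concept of depth ≤ ℓ. -/
theorem hornALC_expressive_completeness_concepts {Con Rol : Type}
    [Fintype Con] [Fintype Rol] (C : ALC Con Rol) (ℓ : ℕ) (hC : C.depth = ℓ) :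
    [ (∃ H : ALC Con Rol, H.IsHorn ∧ ConceptEquiv C H),
      PreservedHorn C,
      PreservedHornL C ℓ,
      (∃ H : ALC Con Rol, H.IsHorn ∧ H.depth ≤ ℓ ∧ ConceptEquiv C H) ].TFAE ∧
    [ (∃ H : ALC Con Rol, H.IsHorn ∧ ConceptEquivFin C H),
      PreservedHornFin C,
      PreservedHornLFin C ℓ,
      (∃ H : ALC Con Rol, H.IsHorn ∧ H.depth ≤ ℓ ∧ ConceptEquivFin C H) ].TFAE := by
  have hd : C.depth ≤ ℓ := le_of_eq hC
  constructor
  · tfae_have 1 → 2 := fun ⟨H, h1, h2⟩ => impl_one_two h1 h2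
    tfae_have 2 → 3 := impl_two_three hd
    tfae_have 3 → 4 := impl_three_four hd
    tfae_have 4 → 1 := fun ⟨H, h1, _, h3⟩ => ⟨H, h1, h3⟩
    tfae_finish
  · tfae_have 1 → 2 := fun ⟨H, h1, h2⟩ => impl_one_two_fin h1 h2
    tfae_have 2 → 3 := impl_two_three_fin hd
    tfae_have 3 → 4 := impl_three_four_fin hd
    tfae_have 4 → 1 := fun ⟨H, h1, _, h3⟩ => ⟨H, h1, h3⟩
    tfae_finish
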